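/- arXiv:2009.11540 — 2 statements merged into one kernel-verified Lean document; each statement's English description precedes it below -/
import Mathlib

section
/- Let E be a finite index set, let λ : E → ℂ satisfy Re(λ i) < 0 for all i, and let Φ : E → Matrix (Fin p) (Fin m) ℂ. Then the H₂-norm of the sum is bounded by the sum of the individual H₂-norms: Real.sqrt((1/(2π)) · ∫_{ν ∈ ℝ} ‖∑_{i ∈ E} (I·ν − λ i)⁻¹ • Φ i‖_F² dν) ≤ ∑_{i ∈ E} ‖Φ i‖_F / Real.sqrt(−2 · Re(λ i)). -/
open MeasureTheory Complex Matrix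
open scoped ENNReal NNReal

/-- Squared Frobenius norm of a complex matrix. -/
noncomputable def frobSq {p m : ℕ} (M : Matrix (Fin p) (Fin m) ℂ) : ℝ :=
  ∑ i, ∑ j, ‖M i j‖ ^ 2

/-- Frobenius norm of a complex matrix. -/
noncomputable def frobNorm {p m : ℕ} (M : Matrix (Fin p) (Fin m) ℂ) : ℝ :=
  Real.sqrt (frobSq M)

lemma integrable_inv_sq_add (a b : ℝ) (ha : a ≠ 0) :
    Integrable (fun ν : ℝ => (a ^ 2 + (ν - b) ^ 2)⁻¹) := by
  have h1 : Integrable (fun ν : ℝ => a⁻¹ ^ 2 * (1 + (ν / a) ^ 2)⁻¹) :=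
    (integrable_inv_one_add_sq.comp_div ha).const_mul _
  have h2 : Integrable (fun ν : ℝ => a⁻¹ ^ 2 * (1 + ((ν - b) / a) ^ 2)⁻¹) :=
    h1.comp_sub_right b
  refine h2.congr (Filter.Eventually.of_forall fun ν => ?_)
  field_simp

lemma integral_inv_sq_add (a b : ℝ) (ha : 0 < a) :
    ∫ ν : ℝ, (a ^ 2 + (ν - b) ^ 2)⁻¹ = Real.pi / a := by
  have key : ∀ x : ℝ, (a ^ 2 + (x - b) ^ 2)⁻¹ = a⁻¹ ^ 2 * (1 + ((x - b) / a) ^ 2)⁻¹ := by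
    intro x; field_simp
  simp_rw [key]
  rw [integral_const_mul]
  have h3 : (∫ x : ℝ, (1 + ((x - b) / a) ^ 2)⁻¹) = ∫ x : ℝ, (1 + (x / a) ^ 2)⁻¹ :=
    integral_sub_right_eq_self (fun x => (1 + (x / a) ^ 2)⁻¹) b
  rw [h3, MeasureTheory.Measure.integral_comp_div (fun y : ℝ => (1 + y ^ 2)⁻¹) a,
    integral_univ_inv_one_add_sq, abs_of_pos ha, smul_eq_mul]
  field_simp

theorem H2_truncation_error_bound
    (E : Type*) [Fintype E] (p m : ℕ)
    (lam : E → ℂ) (hlam : ∀ i, (lam i).re < 0)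
    (Φ : E → Matrix (Fin p) (Fin m) ℂ) :
    Real.sqrt (((1 : ℝ) / (2 * Real.pi)) *
        ∫ ν : ℝ, frobSq (∑ i, (Complex.I * (ν : ℂ) - lam i)⁻¹ • Φ i)) ≤
      ∑ i, frobNorm (Φ i) / Real.sqrt (-2 * (lam i).re) := by
  classical
  have pi_pos := Real.pi_pos
  set a : E → ℝ := fun i => -(lam i).re with ha_def
  have ha : ∀ i, 0 < a i := fun i => by simpa [ha_def] using hlam i
  -- vectors and functions
  set V : E → EuclideanSpace ℂ (Fin p × Fin m) := fun i => WithLp.toLp 2 (fun q : Fin p × Fin m => Φ i q.1 q.2) with hV_def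
  set G : E → ℝ → EuclideanSpace ℂ (Fin p × Fin m) :=
    fun i ν => (Complex.I * (ν : ℂ) - lam i)⁻¹ • V i with hG_def
  set T : ℝ → EuclideanSpace ℂ (Fin p × Fin m) := fun ν => ∑ i, G i ν with hT_def
  have hne : ∀ i (ν : ℝ), Complex.I * (ν : ℂ) - lam i ≠ 0 := by
    intro i ν h
    have h2 := congrArg Complex.re h
    simp [Complex.sub_re, Complex.mul_re] at h2
    exact absurd h2 (ne_of_lt (hlam i))
  have hfsq : ∀ ν : ℝ, frobSq (∑ i, (Complex.I * (ν : ℂ) - lam i)⁻¹ • Φ i) = ‖T ν‖ ^ 2 := by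
    intro ν
    rw [hT_def]
    simp only
    rw [EuclideanSpace.norm_eq, Real.sq_sqrt (by positivity)]
    rw [frobSq, Fintype.sum_prod_type]
    refine Finset.sum_congr rfl fun r _ => Finset.sum_congr rfl fun s _ => ?_
    simp [hG_def, hV_def, Finset.sum_apply, Matrix.sum_apply,
      PiLp.smul_apply, smul_eq_mul]
  have hVsq : ∀ i, ‖V i‖ ^ 2 = frobSq (Φ i) := by
    intro i
    rw [EuclideanSpace.norm_eq, Real.sq_sqrt (by positivity), frobSq, Fintype.sum_prod_type]
  have hfrobSq_nonneg : ∀ i, 0 ≤ frobSq (Φ i) := fun i => by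
    rw [frobSq]; positivity
  have hcont : ∀ i, Continuous (G i) := by
    intro i
    rw [hG_def]
    exact (((continuous_const.mul Complex.continuous_ofReal).sub continuous_const).inv₀
      (fun ν => hne i ν)).smul continuous_const
  have hGnorm : ∀ i (ν : ℝ),
      ‖G i ν‖ ^ 2 = frobSq (Φ i) * ((a i) ^ 2 + (ν - (lam i).im) ^ 2)⁻¹ := by
    intro i ν
    rw [hG_def]
    simp only [norm_smul, mul_pow, hVsq]
    rw [mul_comm]
    congr 1
    rw [norm_inv, inv_pow, Complex.sq_norm, Complex.normSq_apply]
    congr 1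
    simp [Complex.sub_re, Complex.sub_im, Complex.mul_re, Complex.mul_im, ha_def]
    ring
  have hGsnorm : ∀ i, eLpNorm (G i) 2 volume =
      ENNReal.ofReal (frobNorm (Φ i) * Real.sqrt (Real.pi / a i)) := by
    intro i
    rw [eLpNorm_eq_lintegral_rpow_enorm_toReal two_ne_zero ENNReal.ofNat_ne_top]
    have htwo : (2 : ℝ≥0∞).toReal = 2 := by simp
    rw [htwo]
    have h1 : ∀ ν : ℝ, ‖G i ν‖ₑ ^ (2 : ℝ)
        = ENNReal.ofReal (frobSq (Φ i)) *
          ENNReal.ofReal (((a i) ^ 2 + (ν - (lam i).im) ^ 2)⁻¹) := by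
      intro ν
      rw [← ofReal_norm,
        ENNReal.ofReal_rpow_of_nonneg (norm_nonneg _) (by norm_num : (0:ℝ) ≤ 2),
        Real.rpow_two, hGnorm i ν, ENNReal.ofReal_mul (hfrobSq_nonneg i)]
    simp_rw [h1]
    rw [lintegral_const_mul' _ _ ENNReal.ofReal_ne_top,
      ← ofReal_integral_eq_lintegral_ofReal
        (integrable_inv_sq_add (a i) (lam i).im (ha i).ne')
        (Filter.Eventually.of_forall fun ν => by positivity),
      integral_inv_sq_add (a i) (lam i).im (ha i),
      ← ENNReal.ofReal_mul (hfrobSq_nonneg i),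
      ENNReal.ofReal_rpow_of_nonneg
        (mul_nonneg (hfrobSq_nonneg i) (div_pos pi_pos (ha i)).le)
        (by norm_num : (0:ℝ) ≤ 1/2)]
    congr 1
    rw [frobNorm, ← Real.sqrt_mul (hfrobSq_nonneg i), Real.sqrt_eq_rpow]
  have hTcont : Continuous T := by
    rw [hT_def]; exact continuous_finset_sum _ fun i _ => hcont i
  set R : ℝ := ∑ i, frobNorm (Φ i) * Real.sqrt (Real.pi / a i) with hR_def
  have hterm_nonneg : ∀ i, 0 ≤ frobNorm (Φ i) * Real.sqrt (Real.pi / a i) := by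
    intro i
    exact mul_nonneg (by rw [frobNorm]; exact Real.sqrt_nonneg _) (Real.sqrt_nonneg _)
  have hR_nonneg : 0 ≤ R := Finset.sum_nonneg fun i _ => hterm_nonneg i
  have hTfun : T = ∑ i, G i := by
    funext ν; rw [hT_def]; simp [Finset.sum_apply]
  have hTle : eLpNorm T 2 volume ≤ ENNReal.ofReal R := by
    calc eLpNorm T 2 volume ≤ ∑ i, eLpNorm (G i) 2 volume := by
          rw [hTfun]
          exact eLpNorm_sum_le (fun i _ => (hcont i).aestronglyMeasurable) one_le_two
      _ = ENNReal.ofReal R := by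
          rw [hR_def, ENNReal.ofReal_sum_of_nonneg (fun i _ => hterm_nonneg i)]
          exact Finset.sum_congr rfl fun i _ => hGsnorm i
  have hInt : (∫ ν : ℝ, frobSq (∑ i, (Complex.I * (ν : ℂ) - lam i)⁻¹ • Φ i)) ≤ R ^ 2 := by
    have e1 : (∫ ν : ℝ, frobSq (∑ i, (Complex.I * (ν : ℂ) - lam i)⁻¹ • Φ i))
        = (∫⁻ ν : ℝ, ENNReal.ofReal (‖T ν‖ ^ 2)).toReal := by
      rw [integral_congr_ae (Filter.Eventually.of_forall hfsq),
        integral_eq_lintegral_of_nonneg_ae (f := fun ν => ‖T ν‖ ^ 2)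
          (Filter.Eventually.of_forall fun ν => by positivity)
          ((hTcont.norm.pow 2).aestronglyMeasurable :
            AEStronglyMeasurable (fun ν => ‖T ν‖ ^ 2) volume)]
    have e2 : (∫⁻ ν : ℝ, ENNReal.ofReal (‖T ν‖ ^ 2)) = eLpNorm T 2 volume ^ (2 : ℝ) := by
      rw [eLpNorm_eq_lintegral_rpow_enorm_toReal two_ne_zero ENNReal.ofNat_ne_top]
      have htwo : (2 : ℝ≥0∞).toReal = 2 := by simp
      rw [htwo, ← ENNReal.rpow_mul]
      norm_num
    rw [e1, e2]
    have e3 : eLpNorm T 2 volume ^ (2 : ℝ) ≤ ENNReal.ofReal R ^ (2 : ℝ) :=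
      ENNReal.rpow_le_rpow hTle (by norm_num)
    have e4 : ENNReal.ofReal R ^ (2 : ℝ) ≠ ⊤ :=
      (ENNReal.rpow_lt_top_of_nonneg (by norm_num) ENNReal.ofReal_ne_top).ne
    calc (eLpNorm T 2 volume ^ (2 : ℝ)).toReal ≤ (ENNReal.ofReal R ^ (2 : ℝ)).toReal :=
          ENNReal.toReal_mono e4 e3
      _ = R ^ 2 := by
          rw [ENNReal.ofReal_rpow_of_nonneg hR_nonneg (by norm_num : (0:ℝ) ≤ 2),
            ENNReal.toReal_ofReal (by positivity), Real.rpow_two]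
  calc Real.sqrt (((1 : ℝ) / (2 * Real.pi)) *
        ∫ ν : ℝ, frobSq (∑ i, (Complex.I * (ν : ℂ) - lam i)⁻¹ • Φ i))
      ≤ Real.sqrt (((1 : ℝ) / (2 * Real.pi)) * R ^ 2) :=
        Real.sqrt_le_sqrt (mul_le_mul_of_nonneg_left hInt (by positivity))
    _ = ∑ i, frobNorm (Φ i) / Real.sqrt (-2 * (lam i).re) := by
        rw [Real.sqrt_mul (by positivity), Real.sqrt_sq hR_nonneg, hR_def, Finset.mul_sum]
        refine Finset.sum_congr rfl fun i _ => ?_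
        have h2a : -2 * (lam i).re = 2 * a i := by rw [ha_def]; ring
        have hπ : Real.pi ≠ 0 := Real.pi_ne_zero
        have hai : a i ≠ 0 := (ha i).ne'
        have hkey : (1 : ℝ) / (2 * Real.pi) * (Real.pi / a i) = (2 * a i)⁻¹ := by
          field_simp
        rw [h2a, mul_comm (Real.sqrt _) _, mul_assoc, ← Real.sqrt_mul (div_pos pi_pos (ha i)).le,
          mul_comm (Real.pi / a i) _, hkey, Real.sqrt_inv, div_eq_mul_inv]
end

section
/- Let λ ∈ ℂ with Re(λ) < 0, let Φ be a complex p × m matrix, and let ω > 0. Then (1/(2π)) · ∫_{ν ∈ [−ω, ω]} ‖(I·ν − λ)⁻¹ • Φ‖_F² dν = (‖Φ‖_F² / (−2 · Re(λ))) · (−(2/π) · Re(atan(ω / λ))). -/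
open MeasureTheory Complex Matrix

/-- Principal-branch complex arctangent. -/
noncomputable def catan (z : ℂ) : ℂ :=
  (1 / (2 * Complex.I)) *
    (Complex.log (1 + Complex.I * z) - Complex.log (1 - Complex.I * z))

lemma arg_re_pos {z : ℂ} (hz : 0 < z.re) : Complex.arg z = Real.arctan (z.im / z.re) := by
  rw [Complex.arg_of_re_nonneg hz.le, Real.arctan_eq_arcsin]
  congr 1
  have habs : ‖z‖ = Real.sqrt (z.re ^ 2 + z.im ^ 2) := by
    rw [Complex.norm_def, Complex.normSq_apply]; ring_nf
  have h1 : Real.sqrt (1 + (z.im / z.re) ^ 2) = ‖z‖ / z.re := by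
    rw [habs, show (1 : ℝ) + (z.im / z.re) ^ 2 = (z.re ^ 2 + z.im ^ 2) / z.re ^ 2 by
      field_simp, Real.sqrt_div' _ (by positivity), Real.sqrt_sq hz.le]
  rw [h1]
  have hz0 : ‖z‖ ≠ 0 := by
    intro h; rw [norm_eq_zero] at h; simp [h] at hz
  field_simp

lemma arg_div_of_re_pos {u v : ℂ} (hu : 0 < u.re) (hv : 0 < v.re) :
    Complex.arg (u / v) = Complex.arg u - Complex.arg v := by
  have hu0 : u ≠ 0 := fun h => by simp [h] at hu
  have hv0 : v ≠ 0 := fun h => by simp [h] at hv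
  have bnd : ∀ w : ℂ, 0 < w.re → -(Real.pi/2) < Complex.arg w ∧ Complex.arg w < Real.pi/2 := by
    intro w hw
    have h1 : Complex.arg w ≤ Real.pi / 2 := Complex.arg_le_pi_div_two_iff.2 (Or.inl hw.le)
    have h2 : -(Real.pi / 2) ≤ Complex.arg w := Complex.neg_pi_div_two_le_arg_iff.2 (Or.inl hw.le)
    have h3 : Complex.arg w ≠ Real.pi / 2 := by
      intro h; exact absurd (Complex.arg_eq_pi_div_two_iff.1 h).1 hw.ne'
    have h4 : Complex.arg w ≠ -(Real.pi / 2) := by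
      intro h; exact absurd (Complex.arg_eq_neg_pi_div_two_iff.1 h).1 hw.ne'
    exact ⟨lt_of_le_of_ne h2 (Ne.symm h4), lt_of_le_of_ne h1 h3⟩
  obtain ⟨hu1, hu2⟩ := bnd u hu
  obtain ⟨hv1, hv2⟩ := bnd v hv
  have key : ((Complex.arg (u / v) : ℝ) : Real.Angle) = ((Complex.arg u - Complex.arg v : ℝ) : Real.Angle) := by
    rw [Complex.arg_div_coe_angle hu0 hv0, Real.Angle.coe_sub]
  have := congrArg Real.Angle.toReal key
  rwa [Complex.arg_coe_angle_toReal_eq_arg,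
    Real.Angle.toReal_coe_eq_self_iff.2 ⟨by linarith, by linarith⟩] at this

lemma integral_inv_sq_add_s15 {b c : ℝ} (hc : 0 < c) (ω : ℝ) :
    (∫ ν in (-ω)..ω, 1 / (c ^ 2 + (ν - b) ^ 2)) =
      (1 / c) * (Real.arctan ((ω - b) / c) - Real.arctan ((-ω - b) / c)) := by
  have hd : ∀ ν : ℝ, HasDerivAt (fun ν : ℝ => (1 / c) * Real.arctan ((ν - b) / c))
      (1 / (c ^ 2 + (ν - b) ^ 2)) ν := by
    intro ν
    have h1 : HasDerivAt (fun ν : ℝ => (ν - b) / c) (1 / c) ν := by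
      simpa using ((hasDerivAt_id ν).sub_const b).div_const c
    have h2 := (Real.hasDerivAt_arctan ((ν - b) / c)).comp ν h1
    have h3 := h2.const_mul (1 / c)
    refine h3.congr_deriv ?_
    field_simp
  rw [intervalIntegral.integral_eq_sub_of_hasDerivAt (fun ν _ => hd ν) ?_]
  · ring
  · apply Continuous.intervalIntegrable
    apply Continuous.div continuous_const
    · fun_prop
    · intro ν; positivity

lemma frobSq_smul {p m : ℕ} (s : ℂ) (Φ : Matrix (Fin p) (Fin m) ℂ) :
    frobSq (s • Φ) = ‖s‖ ^ 2 * frobSq Φ := by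
  simp [frobSq, Matrix.smul_apply, smul_eq_mul, norm_mul, mul_pow, Finset.mul_sum]

theorem freq_limited_H2_norm_single_mode
    (p m : ℕ) (lam : ℂ) (hlam : lam.re < 0) (Φ : Matrix (Fin p) (Fin m) ℂ)
    (ω : ℝ) (hω : 0 < ω) :
    ((1 : ℝ) / (2 * Real.pi)) *
        (∫ ν in (-ω)..ω, frobSq ((Complex.I * (ν : ℂ) - lam)⁻¹ • Φ)) =
      (frobSq Φ / (-2 * lam.re)) * (-(2 / Real.pi) * (catan ((ω : ℂ) / lam)).re) := by
  set b := lam.im with hb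
  set c := -lam.re with hc
  have hcpos : 0 < c := by simp [hc]; linarith
  have hlam0 : lam ≠ 0 := fun h => by simp [h] at hlam
  -- integrand rewrite
  have hns : ∀ ν : ℝ, Complex.normSq (Complex.I * (ν : ℂ) - lam) = c ^ 2 + (ν - b) ^ 2 := by
    intro ν; simp [Complex.normSq_apply, hc, hb]; ring
  have hInt : ∀ ν : ℝ, frobSq ((Complex.I * (ν : ℂ) - lam)⁻¹ • Φ) =
      (1 / (c ^ 2 + (ν - b) ^ 2)) * frobSq Φ := by
    intro ν
    rw [frobSq_smul, norm_inv, inv_pow, Complex.sq_norm, hns ν, one_div]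
  rw [intervalIntegral.integral_congr (fun ν _ => hInt ν),
    intervalIntegral.integral_mul_const, integral_inv_sq_add_s15 hcpos ω]
  -- RHS: compute catan real part
  have hneg : (-lam : ℂ) ≠ 0 := neg_ne_zero.2 hlam0
  have hvre : (0:ℝ) < (-lam).re := by simpa using hlam
  have hure1 : (0:ℝ) < (-lam - Complex.I * (ω:ℂ)).re := by
    simp [Complex.sub_re, Complex.mul_re]; linarith
  have hure2 : (0:ℝ) < (-lam + Complex.I * (ω:ℂ)).re := by
    simp [Complex.add_re, Complex.mul_re]; linarith
  have h1 : 1 + Complex.I * ((ω:ℂ)/lam) = (-lam - Complex.I * (ω:ℂ)) / (-lam) := by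
    rw [eq_div_iff hneg]; field_simp; ring
  have h2 : 1 - Complex.I * ((ω:ℂ)/lam) = (-lam + Complex.I * (ω:ℂ)) / (-lam) := by
    rw [eq_div_iff hneg]; field_simp; ring
  have hI : (1 / (2 * Complex.I) : ℂ) = -(Complex.I/2) := by
    rw [eq_comm, eq_div_iff (by simp [Complex.I_ne_zero] : (2*Complex.I:ℂ) ≠ 0)]
    ring_nf
    simp [Complex.I_sq]
  have hre : ∀ w : ℂ, (-(Complex.I/2) * w).re = w.im / 2 := by
    intro w
    simp [Complex.mul_re, Complex.div_re, Complex.div_im]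
    ring
  have hcatan : (catan ((ω:ℂ)/lam)).re =
      (Complex.arg (-lam - Complex.I * (ω:ℂ)) - Complex.arg (-lam + Complex.I * (ω:ℂ))) / 2 := by
    rw [catan, h1, h2, hI, hre, Complex.sub_im, Complex.log_im, Complex.log_im,
      arg_div_of_re_pos hure1 hvre, arg_div_of_re_pos hure2 hvre]
    ring
  have ha1 : Complex.arg (-lam - Complex.I * (ω:ℂ)) = Real.arctan ((-b - ω) / c) := by
    rw [arg_re_pos hure1]; congr 1 <;> simp [hb, hc]
  have ha2 : Complex.arg (-lam + Complex.I * (ω:ℂ)) = Real.arctan ((-b + ω) / c) := by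
    rw [arg_re_pos hure2]; congr 1 <;> simp [hb, hc]
  rw [hcatan, ha1, ha2]
  have e1 : (-ω - b) / c = (-b - ω)/c := by ring_nf
  have e2 : (ω - b) / c = (-b + ω)/c := by ring_nf
  rw [e1, e2, show -2 * lam.re = 2 * c by rw [hc]; ring]
  have hπ : Real.pi ≠ 0 := Real.pi_ne_zero
  field_simp
  ring
end
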